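/- Let F be a field, d > 0 an integer, and Z ⊆ ℙ²(F) a finite set of points with d + 2 ≤ |Z| ≤ 2d + 1. If no line of ℙ² contains at least d + 2 points of Z, then Z imposes independent conditions on the homogeneous forms of degree d (the evaluation map from degree-d forms to F^Z is surjective). -/

import Mathlib

open MvPolynomial
open Matrix

set_option linter.unusedSectionVars false
set_option maxHeartbeats 1000000

section Aux
variable {F : Type*} [Field F] [DecidableEq F]

/-- collinearity of three projective points (as vectors) -/
def coll (a b c : Fin 3 → F) : Prop := Matrix.det (Matrix.of ![a, b, c]) = 0

instance (a b c : Fin 3 → F) : Decidable (coll a b c) := by unfold coll; infer_instance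

lemma coll_iff_not_li {a b c : Fin 3 → F} :
    coll a b c ↔ ¬ LinearIndependent F ![a, b, c] := by
  rw [show (![a,b,c] : Fin 3 → Fin 3 → F) = (Matrix.of ![a,b,c]).row from rfl,
    Matrix.linearIndependent_rows_iff_isUnit, Matrix.isUnit_iff_isUnit_det, isUnit_iff_ne_zero]
  unfold coll; tauto

lemma det3_rot (a b c : Fin 3 → F) :
    Matrix.det (Matrix.of ![a, b, c]) = Matrix.det (Matrix.of ![b, c, a]) := by
  simp [Matrix.det_fin_three]; ring

lemma det3_swap23 (a b c : Fin 3 → F) :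
    Matrix.det (Matrix.of ![a, b, c]) = - Matrix.det (Matrix.of ![a, c, b]) := by
  simp [Matrix.det_fin_three]; ring

lemma coll_perm23 {a b c : Fin 3 → F} : coll a b c ↔ coll a c b := by
  unfold coll; rw [det3_swap23]; simp

lemma cross_dot (a b x : Fin 3 → F) :
    (a ⨯₃ b) ⬝ᵥ x = Matrix.det (Matrix.of ![a, b, x]) := by
  rw [dotProduct_comm, triple_product_eq_det]
  rw [show (Matrix.det ![x, a, b] : F) = Matrix.det (Matrix.of ![x, a, b]) from rfl, det3_rot]

lemma cross_dot_left (a b : Fin 3 → F) : (a ⨯₃ b) ⬝ᵥ a = 0 := by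
  rw [dotProduct_comm]; exact dot_self_cross a b

lemma cross_dot_right (a b : Fin 3 → F) : (a ⨯₃ b) ⬝ᵥ b = 0 := by
  rw [dotProduct_comm]; exact dot_cross_self a b

lemma cross_dot_coll {a b x : Fin 3 → F} : (a ⨯₃ b) ⬝ᵥ x = 0 ↔ coll a b x := by
  rw [cross_dot]; rfl

lemma range_pair (a b : Fin 3 → F) : Set.range ![a, b] = {a, b} := by
  simp [Set.range_subset_iff, Fin.forall_fin_two, Set.pair_comm]

lemma snoc_eq (a b c : Fin 3 → F) : (![a, b, c] : Fin 3 → Fin 3 → F) = Fin.snoc ![a, b] c := by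
  funext i; fin_cases i <;> simp [Fin.snoc] <;> rfl

lemma li3_iff {a b c : Fin 3 → F} :
    LinearIndependent F ![a, b, c] ↔
      LinearIndependent F ![a, b] ∧ c ∉ Submodule.span F {a, b} := by
  rw [snoc_eq, linearIndependent_fin_snoc, range_pair]

lemma not_li_of_mem {p : Submodule F (Fin 3 → F)} (hp : Module.finrank F p ≤ 2)
    {a b c : Fin 3 → F} (ha : a ∈ p) (hb : b ∈ p) (hc : c ∈ p) :
    ¬ LinearIndependent F ![a, b, c] := by
  intro hli
  have hsub : Submodule.span F (Set.range ![a,b,c]) ≤ p := by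
    rw [Submodule.span_le, Set.range_subset_iff]; intro i; fin_cases i <;> assumption
  have h3 : Module.finrank F (Submodule.span F (Set.range ![a,b,c])) = 3 := by
    rw [finrank_span_eq_card hli]; simp
  have := Submodule.finrank_mono hsub
  omega

lemma span_pair_finrank_le (a b : Fin 3 → F) :
    Module.finrank F (Submodule.span F {a, b} : Submodule F (Fin 3 → F)) ≤ 2 := by
  have := finrank_range_le_card (R := F) ![a, b]
  rwa [Set.finrank, range_pair, Fintype.card_fin] at this

lemma span_pair_finrank_eq {a b : Fin 3 → F} (h : LinearIndependent F ![a, b]) :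
    Module.finrank F (Submodule.span F {a, b} : Submodule F (Fin 3 → F)) = 2 := by
  have := finrank_span_eq_card (R := F) h
  rwa [range_pair, Fintype.card_fin] at this

lemma coll_of_mem {p : Submodule F (Fin 3 → F)} (hp : Module.finrank F p ≤ 2)
    {a b c : Fin 3 → F} (ha : a ∈ p) (hb : b ∈ p) (hc : c ∈ p) : coll a b c :=
  coll_iff_not_li.mpr (not_li_of_mem hp ha hb hc)

lemma coll_of_mem_span_pair {a b v : Fin 3 → F} (hv : v ∈ Submodule.span F {a, b}) :
    coll a b v :=
  coll_of_mem (span_pair_finrank_le a b)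
    (Submodule.subset_span (by simp)) (Submodule.subset_span (by simp)) hv

lemma mem_span_of_coll {a b v : Fin 3 → F} (hab : LinearIndependent F ![a, b])
    (h : coll a b v) : v ∈ Submodule.span F {a, b} := by
  by_contra hv
  exact (coll_iff_not_li.mp h) (li3_iff.mpr ⟨hab, hv⟩)

lemma exists_outside (a b : Fin 3 → F) : ∃ c, c ∉ Submodule.span F {a, b} := by
  by_contra h
  push_neg at h
  have htop : (Submodule.span F {a, b} : Submodule F (Fin 3 → F)) = ⊤ :=
    Submodule.eq_top_iff'.2 h
  have h2 := span_pair_finrank_le a b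
  rw [htop] at h2
  simp [finrank_top] at h2

lemma cross_ne_zero {a b : Fin 3 → F} (h : LinearIndependent F ![a, b]) : a ⨯₃ b ≠ 0 := by
  obtain ⟨c, hc⟩ := exists_outside a b
  have hli : LinearIndependent F ![a, b, c] := li3_iff.mpr ⟨h, hc⟩
  intro h0
  have := cross_dot a b c
  rw [h0] at this
  simp [zero_dotProduct] at this
  exact (coll_iff_not_li.mp this.symm) hli

lemma li2_swap {a b : Fin 3 → F} (h : LinearIndependent F ![a, b]) :
    LinearIndependent F ![b, a] := by
  rw [LinearIndependent.pair_iff] at h ⊢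
  intro s t hst
  have := h t s (by rw [add_comm]; exact hst)
  exact ⟨this.2, this.1⟩

lemma span_pair_swap_of_mem {a u v : Fin 3 → F} (hau : LinearIndependent F ![a, u])
    (hav : LinearIndependent F ![a, v]) (hv : v ∈ Submodule.span F {a, u}) :
    Submodule.span F {a, v} = Submodule.span F {a, u} := by
  apply Submodule.eq_of_le_of_finrank_le
  · rw [Submodule.span_le]
    intro x hx
    simp only [Set.mem_insert_iff, Set.mem_singleton_iff] at hx
    rcases hx with rfl | rfl
    · exact Submodule.subset_span (by simp)
    · exact hv
  · rw [span_pair_finrank_eq hav]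
    exact span_pair_finrank_le a u

noncomputable def dpl (L : Fin 3 → F) : (Fin 3 → F) →ₗ[F] F where
  toFun v := L ⬝ᵥ v
  map_add' u v := by simp [dotProduct_add]
  map_smul' c v := by simp [dotProduct_smul]

lemma coll_of_ker {L : Fin 3 → F} (hL : L ≠ 0) {a b c : Fin 3 → F}
    (ha : L ⬝ᵥ a = 0) (hb : L ⬝ᵥ b = 0) (hc : L ⬝ᵥ c = 0) : coll a b c := by
  obtain ⟨i, hi⟩ : ∃ i, L i ≠ 0 := Function.ne_iff.mp hL
  have hsurj : Function.Surjective (dpl L) := by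
    intro y
    refine ⟨(y / L i) • (Pi.single i 1 : Fin 3 → F), ?_⟩
    have hdot : L ⬝ᵥ (Pi.single i 1 : Fin 3 → F) = L i := by
      simp [dotProduct_single]
    simp only [dpl, LinearMap.coe_mk, AddHom.coe_mk, dotProduct_smul, hdot, smul_eq_mul]
    field_simp
  have hrange : LinearMap.range (dpl L) = ⊤ := LinearMap.range_eq_top.2 hsurj
  have hrk := LinearMap.finrank_range_add_finrank_ker (dpl L)
  rw [hrange] at hrk
  simp [Module.finrank_pi] at hrk
  have hker : Module.finrank F (LinearMap.ker (dpl L)) ≤ 2 := by omega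
  exact coll_of_mem hker ha hb hc

lemma exists_perp {a u : Fin 3 → F} (hau : LinearIndependent F ![a, u]) :
    ∃ L : Fin 3 → F, L ⬝ᵥ u = 0 ∧ L ⬝ᵥ a ≠ 0 := by
  have hua : LinearIndependent F ![u, a] := li2_swap hau
  obtain ⟨c, hc⟩ := exists_outside u a
  have hli : LinearIndependent F ![u, a, c] := li3_iff.mpr ⟨hua, hc⟩
  refine ⟨u ⨯₃ c, cross_dot_left u c, ?_⟩
  intro h0
  rw [cross_dot_coll] at h0
  rw [coll_perm23] at h0
  exact (coll_iff_not_li.mp h0) hli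

end Aux

section Cover
variable {F : Type*} [Field F] [DecidableEq F]

lemma exists_nonperp {z0 : Fin 3 → F} (hz0 : z0 ≠ 0) :
    ∃ L : Fin 3 → F, L ⬝ᵥ z0 ≠ 0 := by
  obtain ⟨i, hi⟩ : ∃ i, z0 i ≠ 0 := Function.ne_iff.mp hz0
  refine ⟨Pi.single i 1, ?_⟩
  have : (Pi.single i 1 : Fin 3 → F) ⬝ᵥ z0 = z0 i := by
    simp [single_dotProduct]
  rw [this]; exact hi

lemma cover_lemma (z0 : Fin 3 → F) (hz0 : z0 ≠ 0) :
    ∀ (d : ℕ) (S : Finset (Fin 3 → F)),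
    (∀ w ∈ S, LinearIndependent F ![z0, w]) →
    S.card ≤ 2 * d →
    (∀ L : Fin 3 → F, L ≠ 0 → L ⬝ᵥ z0 = 0 → (S.filter (fun v => L ⬝ᵥ v = 0)).card ≤ d) →
    ∃ Ls : List (Fin 3 → F), Ls.length = d ∧ (∀ L ∈ Ls, L ⬝ᵥ z0 ≠ 0) ∧
      ∀ w ∈ S, ∃ L ∈ Ls, L ⬝ᵥ w = 0 := by
  intro d
  induction d with
  | zero =>
    intro S _ hcard _
    have : S = ∅ := Finset.card_eq_zero.mp (Nat.le_zero.mp hcard)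
    subst this
    exact ⟨[], rfl, by simp, by simp⟩
  | succ d ih =>
    intro S hSli hcard hlines
    obtain ⟨Lstar, hLstar⟩ := exists_nonperp hz0
    by_cases hall : ∀ u ∈ S, ∀ v ∈ S, coll z0 u v
    · -- all points on one line through z0
      have hSsmall : S.card ≤ d + 1 := by
        rcases S.eq_empty_or_nonempty with rfl | ⟨u0, hu0⟩
        · simp
        · have hli := hSli u0 hu0
          have hLw : (z0 ⨯₃ u0) ≠ 0 := cross_ne_zero hli
          have hperp : (z0 ⨯₃ u0) ⬝ᵥ z0 = 0 := cross_dot_left z0 u0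
          have := hlines (z0 ⨯₃ u0) hLw hperp
          have hfil : S.filter (fun v => (z0 ⨯₃ u0) ⬝ᵥ v = 0) = S := by
            apply Finset.filter_true_of_mem
            intro v hv
            rw [cross_dot_coll]
            exact hall u0 hu0 v hv
          rwa [hfil] at this
      -- choose a perpendicular line for each point
      choose! Lf hLf1 hLf2 using fun (w : Fin 3 → F) (h : LinearIndependent F ![z0, w]) =>
        exists_perp h
      set base : List (Fin 3 → F) := S.toList.map (fun w => Lf w) with hbase
      refine ⟨base ++ List.replicate (d + 1 - S.card) Lstar, ?_, ?_, ?_⟩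
      · simp [hbase]
        omega
      · intro L hL
        rcases List.mem_append.mp hL with hL | hL
        · obtain ⟨w, hw, rfl⟩ := List.mem_map.mp hL
          rw [Finset.mem_toList] at hw
          exact hLf2 w (hSli w hw)
        · rw [List.eq_of_mem_replicate hL]
          exact hLstar
      · intro w hw
        refine ⟨Lf w, List.mem_append.mpr (Or.inl ?_), hLf1 w (hSli w hw)⟩
        exact List.mem_map.mpr ⟨w, Finset.mem_toList.mpr hw, rfl⟩
    · -- there exist two points not collinear with z0
      push_neg at hall
      obtain ⟨u1, hu1, v1, hv1, huv1⟩ := hall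
      set f : (Fin 3 → F) → ℕ := fun a => (S.filter (fun v => coll z0 a v)).card with hf
      obtain ⟨w, hwS, hwmax⟩ := Finset.exists_max_image S f ⟨u1, hu1⟩
      set T := S.filter (fun x => ¬ coll z0 w x) with hT
      have hTne : T.Nonempty := by
        rw [Finset.filter_nonempty_iff]
        by_contra h
        push_neg at h
        have hmemspan : ∀ x ∈ S, x ∈ Submodule.span F {z0, w} := fun x hx =>
          mem_span_of_coll (hSli w hwS) (h x hx)
        exact huv1 (coll_of_mem (span_pair_finrank_le z0 w)
          (Submodule.subset_span (by simp)) (hmemspan u1 hu1) (hmemspan v1 hv1))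
      obtain ⟨w', hw'T, hw'max⟩ := Finset.exists_max_image T f hTne
      rw [hT, Finset.mem_filter] at hw'T
      obtain ⟨hw'S, hww'⟩ := hw'T
      have hwne : w ≠ w' := by
        intro h; subst h
        exact hww' (coll_of_mem_span_pair (Submodule.subset_span (by simp)))
      -- the line through w and w'
      set L0 := w ⨯₃ w' with hL0
      have hL0z0 : L0 ⬝ᵥ z0 ≠ 0 := by
        rw [hL0, cross_dot]
        intro h
        rw [det3_rot, det3_rot] at h
        exact hww' h
      have hL0w : L0 ⬝ᵥ w = 0 := cross_dot_left w w'
      have hL0w' : L0 ⬝ᵥ w' = 0 := cross_dot_right w w'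
      set S' := (S.erase w).erase w' with hS'
      have hw'mem : w' ∈ S.erase w := Finset.mem_erase.mpr ⟨Ne.symm hwne, hw'S⟩
      have hcard' : S'.card = S.card - 2 := by
        rw [hS', Finset.card_erase_of_mem hw'mem, Finset.card_erase_of_mem hwS]
        omega
      have hS'sub : S' ⊆ S := Finset.Subset.trans (Finset.erase_subset _ _) (Finset.erase_subset _ _)
      -- bounds f w ≤ d+1 and f w' ≤ d+1
      have hfbound : ∀ a ∈ S, (S.filter (fun v => coll z0 a v)).card ≤ d + 1 := by
        intro a ha
        have hli := hSli a ha
        have h1 := hlines (z0 ⨯₃ a) (cross_ne_zero hli) (cross_dot_left z0 a)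
        have h2 : (S.filter (fun v => coll z0 a v)).card
            = (S.filter (fun v => (z0 ⨯₃ a) ⬝ᵥ v = 0)).card := by
          congr 1
          apply Finset.filter_congr
          intro v _
          exact (cross_dot_coll).symm
        omega
      -- key: classes are determined by span; disjointness for non-collinear reps
      have hclseq : ∀ a ∈ S, ∀ u ∈ S, coll z0 a u →
          S.filter (fun v => coll z0 u v) ⊆ S.filter (fun v => coll z0 a v) := by
        intro a ha u hu hcol v
        simp only [Finset.mem_filter]
        rintro ⟨hvS, hcv⟩
        refine ⟨hvS, ?_⟩
        have hu' : u ∈ Submodule.span F {z0, a} := mem_span_of_coll (hSli a ha) hcol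
        have hv' : v ∈ Submodule.span F {z0, u} := mem_span_of_coll (hSli u hu) hcv
        have hle : Submodule.span F {z0, u} ≤ Submodule.span F {z0, a} := by
          rw [Submodule.span_le]
          intro x hx
          simp only [Set.mem_insert_iff, Set.mem_singleton_iff] at hx
          rcases hx with rfl | rfl
          · exact Submodule.subset_span (by simp)
          · exact hu'
        exact coll_of_mem_span_pair (hle hv')
      have hdisj : ∀ a ∈ S, ∀ b ∈ S, ¬ coll z0 a b →
          Disjoint (S.filter (fun v => coll z0 a v)) (S.filter (fun v => coll z0 b v)) := by
        intro a ha b hb hncol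
        rw [Finset.disjoint_left]
        intro v hva hvb
        rw [Finset.mem_filter] at hva hvb
        have hvS := hva.1
        have h1 : Submodule.span F {z0, v} = Submodule.span F {z0, a} :=
          span_pair_swap_of_mem (hSli a ha) (hSli v hvS) (mem_span_of_coll (hSli a ha) hva.2)
        have h2 : Submodule.span F {z0, v} = Submodule.span F {z0, b} :=
          span_pair_swap_of_mem (hSli b hb) (hSli v hvS) (mem_span_of_coll (hSli b hb) hvb.2)
        apply hncol
        have : b ∈ Submodule.span F {z0, a} := by
          rw [← h1, h2]; exact Submodule.subset_span (by simp)
        exact coll_of_mem_span_pair this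
      -- line condition for S'
      have hlines' : ∀ L : Fin 3 → F, L ≠ 0 → L ⬝ᵥ z0 = 0 →
          (S'.filter (fun v => L ⬝ᵥ v = 0)).card ≤ d := by
        intro L hL hLz
        set A := S'.filter (fun v => L ⬝ᵥ v = 0) with hA
        rcases A.eq_empty_or_nonempty with hAe | ⟨u, huA⟩
        · rw [hAe]; simp
        · rw [hA, Finset.mem_filter] at huA
          obtain ⟨huS', huL⟩ := huA
          have huS : u ∈ S := hS'sub huS'
          have hAsub : A ⊆ S'.filter (fun v => coll z0 u v) := by
            intro v hv
            rw [hA, Finset.mem_filter] at hv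
            rw [Finset.mem_filter]
            exact ⟨hv.1, coll_of_ker hL hLz huL hv.2⟩
          have hAsubS : A ⊆ S.filter (fun v => coll z0 u v) := by
            intro v hv
            have := hAsub hv
            rw [Finset.mem_filter] at this ⊢
            exact ⟨hS'sub this.1, this.2⟩
          by_cases hcwu : coll z0 w u
          · -- u in class of w
            have hsub2 : A ⊆ (S.filter (fun v => coll z0 w v)).erase w := by
              intro v hv
              have hv1 := hAsub hv
              rw [Finset.mem_filter] at hv1
              have hvS' := hv1.1
              refine Finset.mem_erase.mpr ⟨?_, ?_⟩
              · intro h; subst h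
                rw [hS'] at hvS'
                exact (Finset.mem_erase.mp (Finset.mem_of_mem_erase hvS')).1 rfl
              · exact hclseq w hwS u huS hcwu (hAsubS hv)
            have hcard2 := Finset.card_le_card hsub2
            rw [Finset.card_erase_of_mem] at hcard2
            · have := hfbound w hwS
              omega
            · exact Finset.mem_filter.mpr ⟨hwS,
                coll_of_mem_span_pair (Submodule.subset_span (by simp))⟩
          · by_cases hcw'u : coll z0 w' u
            · have hsub2 : A ⊆ (S.filter (fun v => coll z0 w' v)).erase w' := by
                intro v hv
                have hv1 := hAsub hv
                rw [Finset.mem_filter] at hv1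
                refine Finset.mem_erase.mpr ⟨?_, ?_⟩
                · intro h; subst h
                  have := hv1.1
                  rw [hS'] at this
                  exact (Finset.mem_erase.mp this).1 rfl
                · exact hclseq w' hw'S u huS hcw'u (hAsubS hv)
              have hcard2 := Finset.card_le_card hsub2
              rw [Finset.card_erase_of_mem] at hcard2
              · have := hfbound w' hw'S
                omega
              · exact Finset.mem_filter.mpr ⟨hw'S,
                  coll_of_mem_span_pair (Submodule.subset_span (by simp))⟩
            · -- three disjoint classes
              have huT : u ∈ T := by
                rw [hT, Finset.mem_filter]; exact ⟨huS, hcwu⟩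
              have hfu_le_fw : (S.filter (fun v => coll z0 u v)).card
                  ≤ (S.filter (fun v => coll z0 w v)).card := hwmax u huS
              have hfu_le_fw' : (S.filter (fun v => coll z0 u v)).card
                  ≤ (S.filter (fun v => coll z0 w' v)).card := hw'max u huT
              have hd1 := hdisj w hwS u huS hcwu
              have hd2 := hdisj w' hw'S u huS hcw'u
              have hd3 := hdisj w hwS w' hw'S hww'
              -- sum of three disjoint subsets of S
              have hsum : (S.filter (fun v => coll z0 w v)).card
                  + (S.filter (fun v => coll z0 w' v)).card
                  + (S.filter (fun v => coll z0 u v)).card ≤ S.card := by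
                have hsub : (S.filter (fun v => coll z0 w v)) ∪ (S.filter (fun v => coll z0 w' v))
                    ∪ (S.filter (fun v => coll z0 u v)) ⊆ S := by
                  intro x hx
                  simp only [Finset.mem_union, Finset.mem_filter] at hx
                  rcases hx with (hx | hx) | hx <;> exact hx.1
                have hc1 := Finset.card_union_of_disjoint hd3
                have hd4 : Disjoint ((S.filter (fun v => coll z0 w v)) ∪ (S.filter (fun v => coll z0 w' v)))
                    (S.filter (fun v => coll z0 u v)) := by
                  rw [Finset.disjoint_union_left]
                  exact ⟨hd1, hd2⟩
                have hc2 := Finset.card_union_of_disjoint hd4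
                have := Finset.card_le_card hsub
                omega
              have hAcard : A.card ≤ (S.filter (fun v => coll z0 u v)).card :=
                Finset.card_le_card hAsubS
              have hfw := hfbound w hwS
              have hfw' := hfbound w' hw'S
              omega
      -- apply IH
      have hcard'' : S'.card ≤ 2 * d := by omega
      obtain ⟨Ls, hLs1, hLs2, hLs3⟩ := ih S' (fun v hv => hSli v (hS'sub hv)) hcard'' hlines'
      refine ⟨L0 :: Ls, by simp [hLs1], ?_, ?_⟩
      · intro L hL
        rcases List.mem_cons.mp hL with rfl | hL
        · exact hL0z0
        · exact hLs2 L hL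
      · intro v hv
        by_cases hvw : v = w
        · exact ⟨L0, List.mem_cons_self, hvw ▸ hL0w⟩
        · by_cases hvw' : v = w'
          · exact ⟨L0, List.mem_cons_self, hvw' ▸ hL0w'⟩
          · have hvS' : v ∈ S' := by
              rw [hS']
              exact Finset.mem_erase.mpr ⟨hvw', Finset.mem_erase.mpr ⟨hvw, hv⟩⟩
            obtain ⟨L, hL, hLv⟩ := hLs3 v hvS'
            exact ⟨L, List.mem_cons_of_mem _ hL, hLv⟩

end Cover

section Poly
variable {F : Type*} [Field F] [DecidableEq F]

noncomputable def linForm (L : Fin 3 → F) : MvPolynomial (Fin 3) F :=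
  ∑ i, MvPolynomial.C (L i) * MvPolynomial.X i

lemma linForm_homog (L : Fin 3 → F) : (linForm L).IsHomogeneous 1 := by
  apply MvPolynomial.IsHomogeneous.sum
  intro i _
  simpa using (MvPolynomial.isHomogeneous_C _ (L i)).mul (MvPolynomial.isHomogeneous_X _ i)

lemma linForm_eval (L z : Fin 3 → F) : MvPolynomial.eval z (linForm L) = L ⬝ᵥ z := by
  simp [linForm, dotProduct]

noncomputable def prodForm (Ls : List (Fin 3 → F)) : MvPolynomial (Fin 3) F :=
  (Ls.map linForm).prod

lemma prodForm_homog (Ls : List (Fin 3 → F)) : (prodForm Ls).IsHomogeneous Ls.length := by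
  induction Ls with
  | nil => simpa [prodForm] using MvPolynomial.isHomogeneous_one (Fin 3) F
  | cons L Ls ih =>
    have := (linForm_homog L).mul ih
    simpa [prodForm, Nat.add_comm] using this

lemma prodForm_eval (Ls : List (Fin 3 → F)) (z : Fin 3 → F) :
    MvPolynomial.eval z (prodForm Ls) = (Ls.map (fun L => L ⬝ᵥ z)).prod := by
  induction Ls with
  | nil => simp [prodForm]
  | cons L Ls ih =>
    simp only [prodForm, List.map_cons, List.prod_cons, _root_.map_mul, linForm_eval]
    rw [show ((Ls.map linForm).prod) = prodForm Ls from rfl, ih]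

end Poly

/-- a set `Z` of `d+2 ≤ |Z| ≤ 2d+1` distinct points of `ℙ²(F)`
(nonzero, pairwise non-proportional representatives) such that no line
contains at least `d+2` of them imposes independent conditions on
homogeneous forms of degree `d`. -/
theorem no_long_line_implies_independent_conditions
    (F : Type*) [Field F] [DecidableEq F] (d : ℕ) (hd : 0 < d)
    (Z : Finset (Fin 3 → F))
    (hZ0 : ∀ z ∈ Z, z ≠ 0)
    (hZprop : ∀ z ∈ Z, ∀ w ∈ Z, z ≠ w → ∀ c : F, z ≠ c • w)
    (hcard₁ : d + 2 ≤ Z.card) (hcard₂ : Z.card ≤ 2 * d + 1)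
    (hline : ¬ ∃ L : Fin 3 → F, L ≠ 0 ∧
      d + 2 ≤ (Z.filter (fun z => ∑ i, L i * z i = 0)).card) :
    ∀ c : (Fin 3 → F) → F, ∃ p : MvPolynomial (Fin 3) F,
      p.IsHomogeneous d ∧ ∀ z ∈ Z, eval z p = c z := by
  intro c
  push_neg at hline
  have key : ∀ z0 ∈ Z, ∃ Ls : List (Fin 3 → F), Ls.length = d ∧
      (∀ L ∈ Ls, L ⬝ᵥ z0 ≠ 0) ∧ ∀ w ∈ Z.erase z0, ∃ L ∈ Ls, L ⬝ᵥ w = 0 := by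
    intro z0 hz0
    apply cover_lemma z0 (hZ0 z0 hz0) d (Z.erase z0)
    · intro w hw
      rw [Finset.mem_erase] at hw
      rw [linearIndependent_fin2]
      constructor
      · show w ≠ 0
        exact hZ0 w hw.2
      · intro a
        show a • w ≠ z0
        exact fun h => hZprop z0 hz0 w hw.2 (Ne.symm hw.1) a h.symm
    · rw [Finset.card_erase_of_mem hz0]
      omega
    · intro L hL hLz
      have h1 := hline L hL
      have heq : (Z.erase z0).filter (fun v => L ⬝ᵥ v = 0)
          = (Z.filter (fun z => ∑ i, L i * z i = 0)).erase z0 := by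
        rw [← Finset.filter_erase]
        apply Finset.filter_congr
        intro x _
        exact Iff.rfl
      have hz0mem : z0 ∈ Z.filter (fun z => ∑ i, L i * z i = 0) := by
        rw [Finset.mem_filter]
        refine ⟨hz0, ?_⟩
        exact hLz
      have h2 := Finset.card_erase_of_mem hz0mem
      have h3 : ((Z.erase z0).filter (fun v => L ⬝ᵥ v = 0)).card
          = ((Z.filter (fun z => ∑ i, L i * z i = 0)).erase z0).card := by rw [heq]
      rw [h3, h2, Nat.sub_le_iff_le_add]
      exact Nat.lt_succ_iff.mp h1
  choose! Ls hlen hnz hcov using key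
  classical
  refine ⟨∑ z0 ∈ Z, MvPolynomial.C (c z0 * (((Ls z0).map (fun L => L ⬝ᵥ z0)).prod)⁻¹)
      * prodForm (Ls z0), ?_, ?_⟩
  · apply MvPolynomial.IsHomogeneous.sum
    intro z0 hz0
    have := (MvPolynomial.isHomogeneous_C (Fin 3)
      (c z0 * (((Ls z0).map (fun L => L ⬝ᵥ z0)).prod)⁻¹)).mul (prodForm_homog (Ls z0))
    rwa [zero_add, hlen z0 hz0] at this
  · intro z hz
    rw [map_sum, Finset.sum_eq_single z]
    · have hprodne : ((Ls z).map (fun L => L ⬝ᵥ z)).prod ≠ 0 := by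
        rw [Ne, List.prod_eq_zero_iff]
        intro h0
        obtain ⟨L, hL, hL0⟩ := List.mem_map.mp h0
        exact hnz z hz L hL hL0
      rw [_root_.map_mul, MvPolynomial.eval_C, prodForm_eval, mul_assoc,
        inv_mul_cancel₀ hprodne, mul_one]
    · intro b hb hbz
      have hzmem : z ∈ Z.erase b := Finset.mem_erase.mpr ⟨fun h => hbz h.symm, hz⟩
      obtain ⟨L, hL, hLz⟩ := hcov b hb z hzmem
      have : ((Ls b).map (fun L => L ⬝ᵥ z)).prod = 0 := by
        rw [List.prod_eq_zero_iff]
        exact List.mem_map.mpr ⟨L, hL, hLz⟩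
      rw [_root_.map_mul, prodForm_eval, this, mul_zero]
    · intro h
      exact absurd hz h
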